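/- (Closure of Mδ-GLMB densities under Kullback–Leibler averaging.) For each i in a finite index set I, let π_i be the Mδ-GLMB density with parameter set {(w_i(L), p_i(·, ℓ; L))}_{L ⊆ 𝕃}, where each p_i(·, ℓ; L) is strictly positive, and let ω_i ≥ 0 with ∑_{i∈I} ω_i = 1. Define η^{(L)}(ℓ) = ∫_X ∏_{i∈I} p_i(x, ℓ; L)^{ω_i} dμ(x), assume 0 < η^{(L)}(ℓ) < ∞ for all ℓ ∈ L ⊆ 𝕃, assume the normalizer D := ∑_{J ⊆ 𝕃} ∏_{i∈I} w_i(J)^{ω_i} ∏_{ℓ∈J} η^{(J)}(ℓ) is positive, and define w̄(L) = D^{-1} ∏_{i∈I} w_i(L)^{ω_i} ∏_{ℓ∈L} η^{(L)}(ℓ) and p̄(x, ℓ; L) = η^{(L)}(ℓ)^{-1} ∏_{i∈I} p_i(x, ℓ; L)^{ω_i}. Then the normalized weighted geometric mean of the π_i is exactly the Mδ-GLMB density with parameter set {(w̄(L), p̄(·, ℓ; L))}_{L ⊆ 𝕃}: for every L ⊆ 𝕃 and x ∈ X^L, ∏_{i∈I} π_i(L, x)^{ω_i} / (∑_{J ⊆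 𝕃} ∫_{X^J} ∏_{i∈I} π_i(J, y)^{ω_i} dμ^J(y)) = w̄(L) ∏_{ℓ∈L} p̄(x_ℓ, ℓ; L). -/

import Mathlib

open MeasureTheory

/-- Closure of Mδ-GLMB densities under Kullback–Leibler averaging: the normalized
weighted geometric mean of Mδ-GLMB densities with parameters `{(w i L, p i · ℓ L)}`
is the Mδ-GLMB density with parameters `{(w̄ L, p̄ · ℓ L)}`. -/
theorem mdglmb_closed_under_kla
    {X : Type*} [MeasurableSpace X] (μ : Measure X) [SigmaFinite μ]
    {𝕃 : Type*} [Fintype 𝕃]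
    {I : Type*} [Fintype I]
    (w : I → Finset 𝕃 → ℝ) (p : I → X → 𝕃 → Finset 𝕃 → ℝ)
    (hwnn : ∀ i L, 0 ≤ w i L) (hwsum : ∀ i, ∑ L : Finset 𝕃, w i L = 1)
    (hpmeas : ∀ i ℓ L, Measurable (fun x => p i x ℓ L))
    (hppos : ∀ i x ℓ L, 0 < p i x ℓ L)
    (hpnorm : ∀ i ℓ L, ∫ x, p i x ℓ L ∂μ = 1)
    (ω : I → ℝ) (hωnn : ∀ i, 0 ≤ ω i) (hωsum : ∑ i, ω i = 1)
    (η : Finset 𝕃 → 𝕃 → ℝ)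
    (hη : ∀ L ℓ, η L ℓ = ∫ x, ∏ i, p i x ℓ L ^ ω i ∂μ)
    (hηpos : ∀ L : Finset 𝕃, ∀ ℓ ∈ L, 0 < η L ℓ)
    (hηfin : ∀ L : Finset 𝕃, ∀ ℓ ∈ L, Integrable (fun x => ∏ i, p i x ℓ L ^ ω i) μ)
    (D : ℝ)
    (hD : D = ∑ J : Finset 𝕃, (∏ i, w i J ^ ω i) * ∏ ℓ : J, η J ℓ)
    (hDpos : 0 < D)
    (wbar : Finset 𝕃 → ℝ) (pbar : X → 𝕃 → Finset 𝕃 → ℝ)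
    (hwbar : ∀ L, wbar L = D⁻¹ * ((∏ i, w i L ^ ω i) * ∏ ℓ : L, η L ℓ))
    (hpbar : ∀ x ℓ L, pbar x ℓ L = (η L ℓ)⁻¹ * ∏ i, p i x ℓ L ^ ω i) :
    ∀ (L : Finset 𝕃) (x : (↥L) → X),
      (∏ i, (w i L * ∏ ℓ : L, p i (x ℓ) ℓ L) ^ ω i) /
        (∑ J : Finset 𝕃,
          ∫ y, ∏ i, (w i J * ∏ ℓ : J, p i (y ℓ) ℓ J) ^ ω i
            ∂(Measure.pi fun _ : J => μ)) =
      wbar L * ∏ ℓ : L, pbar (x ℓ) ℓ L := by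
  intro L x
  letI : MeasureSpace X := ⟨μ⟩
  haveI : SigmaFinite (volume : Measure X) := ‹SigmaFinite μ›
  have key : ∀ (J : Finset 𝕃) (y : (↥J) → X),
      (∏ i, (w i J * ∏ ℓ : J, p i (y ℓ) ℓ J) ^ ω i)
        = (∏ i, w i J ^ ω i) * ∏ ℓ : J, ∏ i, p i (y ℓ) (ℓ : 𝕃) J ^ ω i := by
    intro J y
    have h1 : ∀ i : I, (w i J * ∏ ℓ : J, p i (y ℓ) ℓ J) ^ ω i
        = w i J ^ ω i * ∏ ℓ : J, p i (y ℓ) (ℓ : 𝕃) J ^ ω i := by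
      intro i
      rw [Real.mul_rpow (hwnn i J) (Finset.prod_nonneg fun ℓ _ => (hppos i _ _ _).le),
        Real.finset_prod_rpow _ _ (fun ℓ _ => (hppos i _ _ _).le)]
    simp_rw [h1, Finset.prod_mul_distrib]
    rw [Finset.prod_comm]
  have hden : ∀ J : Finset 𝕃,
      (∫ y, ∏ i, (w i J * ∏ ℓ : J, p i (y ℓ) ℓ J) ^ ω i
          ∂(Measure.pi fun _ : J => μ))
        = (∏ i, w i J ^ ω i) * ∏ ℓ : J, η J ℓ := by
    intro J
    simp_rw [key J]
    rw [integral_const_mul]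
    congr 1
    have := MeasureTheory.integral_fintype_prod_eq_prod (ι := ↥J) (μ := fun _ => (volume : Measure X))
      (fun (ℓ : ↥J) (x : X) => ∏ i, p i x (ℓ : 𝕃) J ^ ω i)
    rw [show (Measure.pi fun _ : J => μ) = (volume : Measure ((↥J) → X)) from rfl,
      ← show (Measure.pi fun _ : J => (volume : Measure X)) = (volume : Measure ((↥J) → X)) from rfl, this]
    exact Finset.prod_congr rfl fun ℓ _ => (hη J ℓ).symm
  have hsum : (∑ J : Finset 𝕃,
      ∫ y, ∏ i, (w i J * ∏ ℓ : J, p i (y ℓ) ℓ J) ^ ω i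
        ∂(Measure.pi fun _ : J => μ)) = D := by
    rw [hD]; exact Finset.sum_congr rfl fun J _ => hden J
  rw [hsum, key L x, hwbar L]
  simp_rw [hpbar]
  rw [Finset.prod_mul_distrib]
  have hE : (∏ ℓ : L, (η L (ℓ : 𝕃))⁻¹) * (∏ ℓ : L, η L (ℓ : 𝕃)) = 1 := by
    rw [← Finset.prod_mul_distrib]
    exact Finset.prod_eq_one fun ℓ _ => inv_mul_cancel₀ (hηpos L ℓ ℓ.2).ne'
  have hD' : D⁻¹ * D = 1 := inv_mul_cancel₀ hDpos.ne'
  rw [div_eq_iff hDpos.ne']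
  calc (∏ i, w i L ^ ω i) * ∏ ℓ : L, ∏ i, p i (x ℓ) (ℓ : 𝕃) L ^ ω i
      = (D⁻¹ * D) * ((∏ i, w i L ^ ω i)
          * (((∏ ℓ : L, (η L (ℓ : 𝕃))⁻¹) * (∏ ℓ : L, η L (ℓ : 𝕃)))
          * ∏ ℓ : L, ∏ i, p i (x ℓ) (ℓ : 𝕃) L ^ ω i)) := by
        rw [hD', hE]; ring
    _ = D⁻¹ * ((∏ i, w i L ^ ω i) * ∏ ℓ : L, η L (ℓ : 𝕃))
          * ((∏ ℓ : L, (η L (ℓ : 𝕃))⁻¹) * ∏ ℓ : L, ∏ i, p i (x ℓ) (ℓ : 𝕃) L ^ ω i) * D := by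
        ring
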